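/- For Re(μ) + 1/2 > |Re(λ)| and z > 0, the Whittaker function satisfies M_{λ,μ}(z) = [Γ(1+2μ) z^{μ+1/2} 2^{-2μ} / (Γ(1/2+μ-λ) Γ(1/2+μ+λ))] ∫_{-1}^{1} e^{zt/2} (1+t)^{μ-1/2-λ} (1-t)^{μ-1/2+λ} dt. -/

import Mathlib

open MeasureTheory Set

/-- Kummer's confluent hypergeometric function M(a,b,z). -/
noncomputable def kummerM (a b z : ℝ) : ℝ :=
  ∑' n : ℕ, ((∏ i ∈ Finset.range n, (a + i)) / ((∏ i ∈ Finset.range n, (b + i)) * n.factorial)) * z ^ n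

/-- The Whittaker function M_{λ,μ}(z). -/
noncomputable def whittakerM (lam mu z : ℝ) : ℝ :=
  Real.exp (-z / 2) * z ^ (mu + 1 / 2) * kummerM (1 / 2 + mu - lam) (1 + 2 * mu) z

lemma gamma_prod {x : ℝ} (hx : 0 < x) (n : ℕ) :
    Real.Gamma (x + n) = (∏ i ∈ Finset.range n, (x + i)) * Real.Gamma x := by
  induction n with
  | zero => simp
  | succ n ih =>
    have hxn : (0:ℝ) < x + n := by positivity
    have : x + (n+1 : ℕ) = (x + n) + 1 := by push_cast; ring
    rw [this, Real.Gamma_add_one hxn.ne', ih, Finset.prod_range_succ]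
    ring

lemma ofReal_integrand {a c : ℝ} {x : ℝ} (hx : x ∈ Ioo (0:ℝ) 1) :
    (x:ℂ) ^ ((a:ℂ)-1) * (1-(x:ℂ)) ^ ((c:ℂ)-1) = ((x ^ (a-1) * (1-x) ^ (c-1) : ℝ) : ℂ) := by
  rw [show ((a:ℂ)-1) = ((a-1 : ℝ) : ℂ) by push_cast; ring,
    show ((c:ℂ)-1) = ((c-1 : ℝ) : ℂ) by push_cast; ring,
    show (1-(x:ℂ)) = ((1-x : ℝ) : ℂ) by push_cast; ring,
    ← Complex.ofReal_cpow hx.1.le, ← Complex.ofReal_cpow (by linarith [hx.2] : (0:ℝ) ≤ 1 - x),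
    ← Complex.ofReal_mul]

lemma integrableOn_beta {a c : ℝ} (ha : 0 < a) (hc : 0 < c) :
    IntegrableOn (fun s : ℝ => s ^ (a-1) * (1-s) ^ (c-1)) (Ioo 0 1) := by
  have h := Complex.betaIntegral_convergent (u := a) (v := c) (by simpa) (by simpa)
  rw [intervalIntegrable_iff_integrableOn_Ioc_of_le zero_le_one] at h
  have h2 : IntegrableOn (fun x : ℝ => (x:ℂ) ^ ((a:ℂ)-1) * (1-(x:ℂ)) ^ ((c:ℂ)-1)) (Ioo 0 1) :=
    h.mono_set Ioo_subset_Ioc_self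
  have h3 : IntegrableOn (fun x : ℝ => ((x:ℂ) ^ ((a:ℂ)-1) * (1-(x:ℂ)) ^ ((c:ℂ)-1)).re) (Ioo 0 1) :=
    h2.re
  refine h3.congr_fun (fun x hx => ?_) measurableSet_Ioo
  dsimp only
  rw [ofReal_integrand hx, Complex.ofReal_re]

lemma beta_real {a c : ℝ} (ha : 0 < a) (hc : 0 < c) :
    ∫ s in Ioo (0:ℝ) 1, s ^ (a-1) * (1-s) ^ (c-1)
      = Real.Gamma a * Real.Gamma c / Real.Gamma (a+c) := by
  have key : Complex.betaIntegral a c = ((∫ s in Ioo (0:ℝ) 1, s ^ (a-1) * (1-s) ^ (c-1) : ℝ) : ℂ) := by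
    rw [Complex.betaIntegral, intervalIntegral.integral_of_le zero_le_one,
      integral_Ioc_eq_integral_Ioo]
    rw [show ((∫ s in Ioo (0:ℝ) 1, s ^ (a-1) * (1-s) ^ (c-1) : ℝ) : ℂ)
        = ∫ s in Ioo (0:ℝ) 1, ((s ^ (a-1) * (1-s) ^ (c-1) : ℝ) : ℂ) from
      (integral_ofReal (𝕜 := ℂ)).symm]
    exact setIntegral_congr_fun measurableSet_Ioo (fun x hx => ofReal_integrand hx)
  have h2 := Complex.Gamma_mul_Gamma_eq_betaIntegral (s := a) (t := c) (by simpa) (by simpa)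
  rw [key, ← Complex.ofReal_add, Complex.Gamma_ofReal, Complex.Gamma_ofReal, Complex.Gamma_ofReal,
    ← Complex.ofReal_mul, ← Complex.ofReal_mul] at h2
  have h3 : Real.Gamma a * Real.Gamma c
      = Real.Gamma (a+c) * ∫ s in Ioo (0:ℝ) 1, s ^ (a-1) * (1-s) ^ (c-1) :=
    Complex.ofReal_injective h2
  have hpos : 0 < Real.Gamma (a+c) := Real.Gamma_pos_of_pos (by linarith)
  field_simp [h3]
  linear_combination -h3

lemma exp_tsum (x : ℝ) : Real.exp x = ∑' n : ℕ, x ^ n / n.factorial := by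
  rw [Real.exp_eq_exp_ℝ, NormedSpace.exp_eq_tsum_div]

lemma exp_beta {a c z : ℝ} (ha : 0 < a) (hc : 0 < c) (hz : 0 < z) :
    ∫ s in Ioo (0:ℝ) 1, Real.exp (z*s) * s ^ (a-1) * (1-s) ^ (c-1)
      = ∑' n : ℕ, (z ^ n / n.factorial)
          * (Real.Gamma (a+n) * Real.Gamma c / Real.Gamma (a+n+c)) := by
  set F : ℕ → ℝ → ℝ := fun n s => (z ^ n / n.factorial) * (s ^ (a+n-1) * (1-s) ^ (c-1)) with hF
  have hint : ∀ n : ℕ, Integrable (F n) (volume.restrict (Ioo (0:ℝ) 1)) := by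
    intro n
    exact (integrableOn_beta (by positivity : (0:ℝ) < a + n) hc).const_mul _
  have hval : ∀ n : ℕ, ∫ s in Ioo (0:ℝ) 1, F n s
      = (z ^ n / n.factorial) * (Real.Gamma (a+n) * Real.Gamma c / Real.Gamma (a+n+c)) := by
    intro n
    rw [hF]
    simp only []
    rw [integral_const_mul, beta_real (by positivity : (0:ℝ) < a + n) hc]
  have hnonneg : ∀ n : ℕ, ∀ s ∈ Ioo (0:ℝ) 1, 0 ≤ F n s := by
    intro n s hs
    have : (0:ℝ) ≤ 1 - s := by linarith [hs.2]
    have hs0 := hs.1.le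
    positivity
  have hnorm : ∀ n : ℕ, (∫ s in Ioo (0:ℝ) 1, ‖F n s‖) = ∫ s in Ioo (0:ℝ) 1, F n s := by
    intro n
    refine setIntegral_congr_fun measurableSet_Ioo (fun s hs => ?_)
    exact Real.norm_of_nonneg (hnonneg n s hs)
  have hbound : ∀ n : ℕ, ∫ s in Ioo (0:ℝ) 1, F n s
      ≤ (z ^ n / n.factorial) * ∫ s in Ioo (0:ℝ) 1, s ^ (a-1) * (1-s) ^ (c-1) := by
    intro n
    rw [hF]
    simp only []
    rw [integral_const_mul]
    refine mul_le_mul_of_nonneg_left ?_ (by positivity)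
    refine setIntegral_mono_on (integrableOn_beta (by positivity : (0:ℝ) < a + n) hc)
      (integrableOn_beta ha hc) measurableSet_Ioo (fun s hs => ?_)
    have h1 : s ^ (a+n-1) ≤ s ^ (a-1) :=
      Real.rpow_le_rpow_of_exponent_ge hs.1 hs.2.le (by linarith [Nat.cast_nonneg (α := ℝ) n])
    exact mul_le_mul_of_nonneg_right h1 (Real.rpow_nonneg (by linarith [hs.2]) _)
  have hsum : Summable fun n : ℕ => ∫ s in Ioo (0:ℝ) 1, ‖F n s‖ := by
    refine Summable.of_nonneg_of_le (fun n => ?_) (fun n => ?_)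
      (((Real.summable_pow_div_factorial z).mul_right
        (∫ s in Ioo (0:ℝ) 1, s ^ (a-1) * (1-s) ^ (c-1))))
    · exact integral_nonneg (fun s => norm_nonneg _)
    · rw [hnorm n]; exact hbound n
  have key := integral_tsum_of_summable_integral_norm hint hsum
  rw [← funext hval] at *
  rw [key]
  refine setIntegral_congr_fun measurableSet_Ioo (fun s hs => ?_)
  have hterm : ∀ n : ℕ, F n s = ((z*s) ^ n / n.factorial) * (s ^ (a-1) * (1-s) ^ (c-1)) := by
    intro n
    have h1 : s ^ (a + (n:ℝ) - 1) = s ^ (a-1) * s ^ n := by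
      rw [show a + (n:ℝ) - 1 = (a-1) + (n:ℝ) by ring, Real.rpow_add hs.1, Real.rpow_natCast]
    rw [hF]
    simp only []
    rw [h1, mul_pow]
    ring
  calc Real.exp (z * s) * s ^ (a-1) * (1-s) ^ (c-1)
      = (∑' n : ℕ, (z*s) ^ n / n.factorial) * (s ^ (a-1) * (1-s) ^ (c-1)) := by
        rw [← exp_tsum]; ring
    _ = ∑' n : ℕ, ((z*s) ^ n / n.factorial) * (s ^ (a-1) * (1-s) ^ (c-1)) := by
        rw [tsum_mul_right]
    _ = ∑' n : ℕ, F n s := tsum_congr fun n => (hterm n).symm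

lemma kummer_integral {a c z : ℝ} (ha : 0 < a) (hc : 0 < c) (hz : 0 < z) :
    kummerM a (a+c) z = (Real.Gamma (a+c) / (Real.Gamma a * Real.Gamma c))
      * ∫ s in Ioo (0:ℝ) 1, Real.exp (z*s) * s ^ (a-1) * (1-s) ^ (c-1) := by
  rw [exp_beta ha hc hz, kummerM, ← tsum_mul_left]
  refine tsum_congr fun n => ?_
  have hGa : 0 < Real.Gamma a := Real.Gamma_pos_of_pos ha
  have hGc : 0 < Real.Gamma c := Real.Gamma_pos_of_pos hc
  have hGb : 0 < Real.Gamma (a+c) := Real.Gamma_pos_of_pos (by linarith)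
  have hGbn : 0 < Real.Gamma (a+c+n) := Real.Gamma_pos_of_pos (by positivity)
  have h1 : Real.Gamma (a + n) = (∏ i ∈ Finset.range n, (a + i)) * Real.Gamma a :=
    gamma_prod ha n
  have h2 : Real.Gamma (a + n + c) = (∏ i ∈ Finset.range n, (a + c + i)) * Real.Gamma (a+c) := by
    rw [show a + (n:ℝ) + c = (a+c) + n by ring]
    exact gamma_prod (by linarith) n
  have hPb : (0:ℝ) < ∏ i ∈ Finset.range n, (a + c + i) :=
    Finset.prod_pos fun i _ => by positivity
  have hfac : (0:ℝ) < n.factorial := by positivity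
  rw [h1, h2]
  field_simp

lemma subst_lemma {a c z : ℝ} :
    ∫ t in Ioo (-1:ℝ) 1, Real.exp (z*t/2) * (1+t) ^ (a-1) * (1-t) ^ (c-1)
      = (2:ℝ) ^ (a+c-1) * Real.exp (-z/2)
        * ∫ s in Ioo (0:ℝ) 1, Real.exp (z*s) * s ^ (a-1) * (1-s) ^ (c-1) := by
  have h1 : ∫ t in Ioo (-1:ℝ) 1, Real.exp (z*t/2) * (1+t) ^ (a-1) * (1-t) ^ (c-1)
      = ∫ t in (-1:ℝ)..1, Real.exp (z*t/2) * (1+t) ^ (a-1) * (1-t) ^ (c-1) := by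
    rw [intervalIntegral.integral_of_le (by norm_num), integral_Ioc_eq_integral_Ioo]
  have h2 := intervalIntegral.integral_comp_mul_add
    (a := (0:ℝ)) (b := 1)
    (fun t => Real.exp (z*t/2) * (1+t) ^ (a-1) * (1-t) ^ (c-1)) (two_ne_zero) (-1)
  norm_num at h2
  rw [h1, show ∫ t in (-1:ℝ)..1, Real.exp (z*t/2) * (1+t) ^ (a-1) * (1-t) ^ (c-1)
      = 2 * ∫ x in (0:ℝ)..1, Real.exp (z*(2*x + -1)/2) * (2*x) ^ (a-1) * (1 - (2*x + -1)) ^ (c-1) by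
    linarith [h2]]
  rw [intervalIntegral.integral_of_le (zero_le_one), integral_Ioc_eq_integral_Ioo]
  rw [show ∫ s in Ioo (0:ℝ) 1, Real.exp (z*(2*s + -1)/2) * (2*s) ^ (a-1) * (1-(2*s + -1)) ^ (c-1)
      = ∫ s in Ioo (0:ℝ) 1, ((2:ℝ) ^ (a-1) * (2:ℝ) ^ (c-1) * Real.exp (-z/2))
          * (Real.exp (z*s) * s ^ (a-1) * (1-s) ^ (c-1)) from
    setIntegral_congr_fun measurableSet_Ioo (fun s hs => ?_), integral_const_mul]
  · rw [show (2:ℝ) ^ (a+c-1) = 2 * ((2:ℝ) ^ (a-1) * (2:ℝ) ^ (c-1)) by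
      rw [← Real.rpow_add (by norm_num : (0:ℝ) < 2), show (a-1)+(c-1) = a+c-2 by ring,
        show a+c-1 = (a+c-2)+1 by ring, Real.rpow_add_one (by norm_num : (2:ℝ) ≠ 0)]
      ring]
    ring
  · have hs1 : (0:ℝ) ≤ s := hs.1.le
    have hs2 : (0:ℝ) ≤ 1 - s := by linarith [hs.2]
    rw [show (1 - (2*s + -1)) = 2 * (1-s) by ring,
      Real.mul_rpow (by norm_num) hs1, Real.mul_rpow (by norm_num) hs2,
      show z*(2*s + -1)/2 = z*s + -z/2 by ring, Real.exp_add]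
    ring

theorem whittaker_integral_representation (lam mu z : ℝ) (h : mu + 1 / 2 > |lam|) (hz : z > 0) :
    whittakerM lam mu z
      = (Real.Gamma (1 + 2 * mu) * z ^ (mu + 1 / 2) * (2 : ℝ) ^ (-2 * mu)
          / (Real.Gamma (1 / 2 + mu - lam) * Real.Gamma (1 / 2 + mu + lam)))
        * ∫ t in Ioo (-1 : ℝ) 1,
            Real.exp (z * t / 2) * (1 + t) ^ (mu - 1 / 2 - lam) * (1 - t) ^ (mu - 1 / 2 + lam) := by
  have hla : lam ≤ |lam| := le_abs_self lam
  have hlb : -lam ≤ |lam| := neg_le_abs lam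
  set a := 1 / 2 + mu - lam with hadef
  set c := 1 / 2 + mu + lam with hcdef
  have ha : 0 < a := by rw [hadef]; linarith
  have hc : 0 < c := by rw [hcdef]; linarith
  have hGa : 0 < Real.Gamma a := Real.Gamma_pos_of_pos ha
  have hGc : 0 < Real.Gamma c := Real.Gamma_pos_of_pos hc
  have hb : 1 + 2 * mu = a + c := by rw [hadef, hcdef]; ring
  have he1 : mu - 1 / 2 - lam = a - 1 := by rw [hadef]; ring
  have he2 : mu - 1 / 2 + lam = c - 1 := by rw [hcdef]; ring
  rw [whittakerM, hb, he1, he2, kummer_integral ha hc hz, subst_lemma]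
  set J := ∫ s in Ioo (0:ℝ) 1, Real.exp (z*s) * s ^ (a-1) * (1-s) ^ (c-1) with hJ
  have h2pow : (2:ℝ) ^ (-2 * mu) * (2:ℝ) ^ (a+c-1) = 1 := by
    rw [← Real.rpow_add (by norm_num : (0:ℝ) < 2),
      show -2 * mu + (a+c-1) = 0 by rw [hadef, hcdef]; ring, Real.rpow_zero]
  linear_combination (-(Real.exp (-z/2) * z ^ (mu + 1/2) * Real.Gamma (a+c) * J
    / (Real.Gamma a * Real.Gamma c))) * h2pow
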